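/- For every i ∈ {1,…,M} and every n ≥ 1, the expected L¹-error of the two-step estimate satisfies E∫_ℝ |f̂_i(t) − f_i(t)| dt ≤ E∫_ℝ |f̄_i(t) − f_i(t)| dt + (4‖K‖₁/α_i)·φ_n + (2√6·‖K‖₁/α_i)·exp(−n·α_i²/4) + ‖K‖₁·(1−α_i)^n. -/

import Mathlib

open MeasureTheory ProbabilityTheory

section Aux

lemma exp_neg_one_lt' : Real.exp (-1) ≤ 0.368 := by
  have hm : Real.exp (-1) * Real.exp 1 = 1 := by rw [← Real.exp_add]; norm_num
  have hgt := Real.exp_one_gt_d9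
  nlinarith [Real.exp_pos (-1)]

lemma bernoulli_mgf_bound' {a : ℝ} (h0 : 0 ≤ a) (h1 : a ≤ 1) :
    1 + (Real.exp (-1) - 1) * a ≤ Real.exp (-(a/2) - a^2/4) := by
  set u : ℝ := a/2 + a^2/4 with hu
  have ha2 : a^2 ≤ 1 := by nlinarith
  have hu0 : 0 ≤ u := by positivity
  have hu1 : u ≤ 1 := by rw [hu]; linarith
  have hb := Real.exp_bound (x := -u) (by rw [abs_neg, abs_of_nonneg hu0]; exact hu1)
    (n := 3) (by norm_num)
  have hsum : (∑ m ∈ Finset.range 3, (-u) ^ m / m.factorial) = 1 - u + u^2/2 := by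
    simp [Finset.sum_range_succ]
    ring
  rw [hsum, abs_neg, abs_of_nonneg hu0] at hb
  norm_num [Nat.factorial] at hb
  have hexp : 1 - u + u^2/2 - u^3 * (2/9) ≤ Real.exp (-u) := by
    have h' := abs_sub_le_iff.1 hb
    nlinarith [h'.2]
  have he : Real.exp (-1) ≤ 0.368 := exp_neg_one_lt'
  have harg : -(a/2) - a^2/4 = -u := by rw [hu]; ring
  rw [harg]
  have h3 : a^4 ≤ a^3 := by nlinarith [pow_nonneg h0 3]
  have h4 : a^5 ≤ a^3 := by nlinarith [pow_nonneg h0 3, pow_nonneg h0 4, sq_nonneg a]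
  have h5 : a^6 ≤ a^3 := by nlinarith [pow_nonneg h0 3, pow_nonneg h0 4, pow_nonneg h0 5]
  have key : u - u^2/2 + u^3 * (2/9) ≤ 0.632 * a := by
    rw [hu]
    nlinarith [mul_nonneg h0 (sq_nonneg (a-1))]
  have hstep : 1 + (Real.exp (-1) - 1) * a ≤ 1 - 0.632 * a := by nlinarith
  linarith

lemma kh_integrable' {K : ℝ → ℝ} (hK : Integrable K) {h : ℝ} (hh : 0 < h) (y : ℝ) :
    Integrable (fun t => h⁻¹ * K ((t - y) / h)) :=
  (((hK.comp_div hh.ne').comp_sub_right y).const_mul _)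

lemma kh_l1' {K : ℝ → ℝ} (hK : Integrable K) {h : ℝ} (hh : 0 < h) (y : ℝ) :
    (∫ t, |h⁻¹ * K ((t - y) / h)|) = ∫ t, |K t| := by
  have h1 : ∀ t : ℝ, |h⁻¹ * K ((t - y) / h)| = h⁻¹ * |K ((t - y) / h)| := fun t => by
    rw [abs_mul, abs_of_nonneg (inv_nonneg.2 hh.le)]
  simp_rw [h1]
  rw [integral_const_mul]
  have h2 : (∫ t, |K ((t - y) / h)|) = ∫ t, (fun u => |K (u / h)|) (t - y) := rfl
  rw [h2, integral_sub_right_eq_self (fun u => |K (u / h)|) y,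
    Measure.integral_comp_div (fun u => |K u|) h, smul_eq_mul, abs_of_pos hh]
  field_simp

lemma kh_sum_l1' {n : ℕ} {K : ℝ → ℝ} (hK : Integrable K) {h : ℝ} (hh : 0 < h)
    (w y : Fin n → ℝ) :
    (∫ t, |∑ k, w k * (h⁻¹ * K ((t - y k) / h))|) ≤ (∑ k, |w k|) * ∫ t, |K t| := by
  have hKa : Integrable (fun t => |K t|) := hK.abs
  have hint : ∀ k : Fin n, Integrable (fun t => h⁻¹ * |K ((t - y k) / h)|) := fun k =>
    kh_integrable' hKa hh (y k)
  have hg : Integrable (fun t => ∑ k, |w k| * (h⁻¹ * |K ((t - y k) / h)|)) :=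
    integrable_finset_sum _ (fun k _ => (hint k).const_mul _)
  have hle : ∀ t : ℝ, |∑ k, w k * (h⁻¹ * K ((t - y k) / h))|
      ≤ ∑ k, |w k| * (h⁻¹ * |K ((t - y k) / h)|) := by
    intro t
    refine (Finset.abs_sum_le_sum_abs _ _).trans (Finset.sum_le_sum fun k _ => ?_)
    rw [abs_mul, abs_mul, abs_of_nonneg (inv_nonneg.2 hh.le)]
  calc (∫ t, |∑ k, w k * (h⁻¹ * K ((t - y k) / h))|)
      ≤ ∫ t, ∑ k, |w k| * (h⁻¹ * |K ((t - y k) / h)|) :=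
        integral_mono_of_nonneg (Filter.Eventually.of_forall fun t => abs_nonneg _) hg
          (Filter.Eventually.of_forall hle)
    _ = ∑ k, |w k| * ∫ t, h⁻¹ * |K ((t - y k) / h)| := by
        rw [integral_finset_sum _ (fun k _ => (hint k).const_mul _)]
        exact Finset.sum_congr rfl fun k _ => integral_const_mul _ _
    _ = ∑ k, |w k| * ∫ t, |K t| := by
        refine Finset.sum_congr rfl fun k _ => ?_
        congr 1
        have := kh_l1' hKa hh (y k)
        simpa [abs_of_nonneg (inv_nonneg.2 hh.le), abs_mul, abs_abs] using this
    _ = (∑ k, |w k|) * ∫ t, |K t| := by rw [Finset.sum_mul]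

lemma coeff_sum_bound' {n : ℕ} {A Nr : ℝ} (hA : 1 ≤ A) (hN : 1 ≤ Nr)
    {a b d : Fin n → ℝ} (ha : ∀ k, 0 ≤ a k) (hd : ∀ k, 0 ≤ d k)
    (hab : ∀ k, |a k - b k| ≤ d k)
    (hSA : ∑ k, a k = A) (hSB : ∑ k, b k = Nr) :
    ∑ k, |a k / A - b k / Nr| ≤ 2 * (∑ k, d k) / Nr := by
  have hA0 : (0:ℝ) < A := by linarith
  have hN0 : (0:ℝ) < Nr := by linarith
  have habs : |Nr - A| ≤ ∑ k, d k := by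
    have h1 : Nr - A = ∑ k, (b k - a k) := by rw [Finset.sum_sub_distrib, hSA, hSB]
    rw [h1]
    refine (Finset.abs_sum_le_sum_abs _ _).trans (Finset.sum_le_sum fun k _ => ?_)
    rw [abs_sub_comm]; exact hab k
  have hterm : ∀ k, |a k / A - b k / Nr| ≤ d k / Nr + a k * (|Nr - A| / (A * Nr)) := by
    intro k
    have he : a k / A - b k / Nr = (a k - b k) / Nr + a k * ((Nr - A) / (A * Nr)) := by
      field_simp
      ring
    rw [he]
    refine (abs_add_le _ _).trans (add_le_add ?_ ?_)
    · rw [abs_div, abs_of_pos hN0]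
      gcongr
      exact hab k
    · rw [abs_mul, abs_of_nonneg (ha k), abs_div, abs_of_pos (mul_pos hA0 hN0)]
  calc ∑ k, |a k / A - b k / Nr| ≤ ∑ k, (d k / Nr + a k * (|Nr - A| / (A * Nr))) :=
        Finset.sum_le_sum fun k _ => hterm k
    _ = (∑ k, d k) / Nr + A * (|Nr - A| / (A * Nr)) := by
        rw [Finset.sum_add_distrib, ← Finset.sum_div, ← Finset.sum_mul, hSA]
    _ = (∑ k, d k) / Nr + |Nr - A| / Nr := by field_simp
    _ ≤ (∑ k, d k) / Nr + (∑ k, d k) / Nr := by gcongr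
    _ = 2 * (∑ k, d k) / Nr := by ring

end Aux

set_option maxHeartbeats 1000000 in
/-- Theorem 1, inequality (1): for each mixture component `i`, the expected `L¹`-error of
the two-step estimate `f̂_i` (built from predicted labels `Î_k`) is bounded by the expected
`L¹`-error of the oracle kernel estimate `f̄_i` (built from the true labels `I_k`) plus
`(4‖K‖₁/α_i) φ_n + (2√6 ‖K‖₁/α_i) exp(−n α_i²/4) + ‖K‖₁ (1−α_i)^n`, where
`φ_n = max_k P(Î_k ≠ I_k)` is the maximal misclassification error. -/
theorem stmt_0 {Ω : Type*} [MeasurableSpace Ω] (P : Measure Ω) [IsProbabilityMeasure P]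
    (n M : ℕ) (hn : 1 ≤ n) (hM : 2 ≤ M)
    (Y : Fin n → Ω → ℝ) (I : Fin n → Ω → ℕ) (Ihat : Fin n → Ω → ℕ)
    (hYmeas : ∀ k, Measurable (Y k)) (hImeas : ∀ k, Measurable (I k))
    (hIhatmeas : ∀ k, Measurable (Ihat k))
    (hIrange : ∀ k ω, I k ω ∈ Finset.Icc 1 M)
    (hIhatrange : ∀ k ω, Ihat k ω ∈ Finset.Icc 0 M)
    -- the pairs (Y_k, I_k) are i.i.d.
    (hindep : iIndepFun (fun k ω => (Y k ω, I k ω)) P)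
    (hident : ∀ k : Fin n,
      Measure.map (fun ω => (Y k ω, I k ω)) P
        = Measure.map (fun ω => (Y ⟨0, hn⟩ ω, I ⟨0, hn⟩ ω)) P)
    -- mixture weights
    (α : ℕ → ℝ) (hα : ∀ i ∈ Finset.Icc 1 M, α i = (P {ω | I ⟨0, hn⟩ ω = i}).toReal)
    (hαpos : ∀ i ∈ Finset.Icc 1 M, 0 < α i)
    -- conditional densities: P(Y₁ ∈ s, I₁ = i) = α_i ∫_s f_i
    (f : ℕ → ℝ → ℝ)
    (hf : ∀ i ∈ Finset.Icc 1 M, ∀ s : Set ℝ, MeasurableSet s →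
      (P ({ω | I ⟨0, hn⟩ ω = i} ∩ (Y ⟨0, hn⟩) ⁻¹' s)).toReal = α i * ∫ t in s, f i t)
    -- kernel and bandwidth
    (K : ℝ → ℝ) (hKint : Integrable K) (hK1 : (∫ t, K t) = 1)
    (h : ℝ) (hh : 0 < h)
    (Kh : ℝ → ℝ → ℝ) (hKh : ∀ t y, Kh t y = h⁻¹ * K ((t - y) / h))
    -- counts of true and predicted labels
    (N Nhat : ℕ → Ω → ℕ)
    (hN : ∀ i ω, N i ω = (Finset.univ.filter fun k => I k ω = i).card)
    (hNhat : ∀ i ω, Nhat i ω = (Finset.univ.filter fun k => Ihat k ω = i).card)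
    (hNhatpos : ∀ i ∈ Finset.Icc 1 M, ∀ᵐ ω ∂P, 1 ≤ Nhat i ω)
    -- oracle and two-step kernel density estimates
    (fbar fhat : ℕ → Ω → ℝ → ℝ)
    (hfbar : ∀ i ω t, fbar i ω t =
      if N i ω = 0 then 0
      else (N i ω : ℝ)⁻¹ * ∑ k, Kh t (Y k ω) * (if I k ω = i then 1 else 0))
    (hfhat : ∀ i ω t, fhat i ω t =
      (Nhat i ω : ℝ)⁻¹ * ∑ k, Kh t (Y k ω) * (if Ihat k ω = i then 1 else 0))
    -- maximal misclassification error
    (φ : ℝ)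
    (hφ : φ = Finset.univ.sup' ⟨⟨0, hn⟩, Finset.mem_univ _⟩
      (fun k => (P {ω | Ihat k ω ≠ I k ω}).toReal))
    (i : ℕ) (hi : i ∈ Finset.Icc 1 M) :
    (∫ ω, (∫ t, |fhat i ω t - f i t|) ∂P)
      ≤ (∫ ω, (∫ t, |fbar i ω t - f i t|) ∂P)
        + 4 * (∫ t, |K t|) / α i * φ
        + 2 * Real.sqrt 6 * (∫ t, |K t|) / α i * Real.exp (-(n : ℝ) * (α i) ^ 2 / 4)
        + (∫ t, |K t|) * (1 - α i) ^ n := by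
  classical
  -- notation
  set i0 : Fin n := ⟨0, hn⟩ with hi0_def
  set c : ℝ := ∫ t, |K t| with hc_def
  have hc0 : 0 ≤ c := integral_nonneg fun t => abs_nonneg _
  set a : ℝ := α i with ha_def
  have ha0 : 0 < a := hαpos i hi
  have hn0 : (0:ℝ) < (n:ℝ) := by exact_mod_cast hn
  have hna : (0:ℝ) < (n:ℝ) * a := mul_pos hn0 ha0
  -- basic measurability
  have hmeasI : ∀ k : Fin n, MeasurableSet {ω | I k ω = i} := fun k =>
    (hImeas k) (measurableSet_singleton i)
  have hmeasNe : ∀ k : Fin n, MeasurableSet {ω | Ihat k ω ≠ I k ω} := fun k =>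
    (measurableSet_eq_fun (hIhatmeas k) (hImeas k)).compl
  have hpair : ∀ k : Fin n, Measurable fun ω => (Y k ω, I k ω) := fun k =>
    (hYmeas k).prodMk (hImeas k)
  -- identical distribution of labels
  have hPI : ∀ k : Fin n, P {ω | I k ω = i} = P {ω | I i0 ω = i} := by
    intro k
    have hs : MeasurableSet ((Set.univ : Set ℝ) ×ˢ ({i} : Set ℕ)) :=
      MeasurableSet.univ.prod (measurableSet_singleton i)
    have h1 : ∀ m : Fin n, {ω | I m ω = i}
        = (fun ω => (Y m ω, I m ω)) ⁻¹' ((Set.univ : Set ℝ) ×ˢ ({i} : Set ℕ)) := by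
      intro m; ext ω; simp [eq_comm]
    rw [h1 k, h1 i0, ← Measure.map_apply (hpair k) hs, ← Measure.map_apply (hpair i0) hs,
      hident k]
  have haP : ∀ k : Fin n, (P {ω | I k ω = i}).toReal = a := fun k => by
    rw [hPI k, ha_def, hα i hi]
  have ha1 : a ≤ 1 := by
    rw [ha_def, hα i hi]
    exact ENNReal.toReal_le_of_le_ofReal zero_le_one (by simpa using prob_le_one)
  -- integrability of the density f i
  have hfint : Integrable (f i) := by
    have h1 := hf i hi Set.univ MeasurableSet.univ
    have h2 : {ω | I i0 ω = i} ∩ (Y i0) ⁻¹' Set.univ = {ω | I i0 ω = i} := by simp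
    rw [h2, setIntegral_univ] at h1
    have h3 : a = a * ∫ t, f i t := by rw [ha_def, hα i hi] at *; exact h1
    by_contra hcon
    rw [integral_undef hcon, mul_zero] at h3
    exact absurd h3 (by linarith)
  -- indicator variables
  set X : Fin n → Ω → ℝ := fun k ω => if I k ω = i then 1 else 0 with hX_def
  set XH : Fin n → Ω → ℝ := fun k ω => if Ihat k ω = i then 1 else 0 with hXH_def
  have hXk : ∀ (k : Fin n) (ω : Ω), X k ω = if I k ω = i then (1:ℝ) else 0 := fun _ _ => rfl
  have hXHk : ∀ (k : Fin n) (ω : Ω), XH k ω = if Ihat k ω = i then (1:ℝ) else 0 := fun _ _ => rfl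
  have hXnn : ∀ (k : Fin n) (ω : Ω), 0 ≤ X k ω := fun k ω => by
    rw [hXk]; split <;> norm_num
  have hXHnn : ∀ (k : Fin n) (ω : Ω), 0 ≤ XH k ω := fun k ω => by
    rw [hXHk]; split <;> norm_num
  -- N as a sum of indicators
  have hNsum : ∀ ω, ((N i ω : ℝ)) = ∑ k, X k ω := by
    intro ω
    rw [hN, Finset.card_filter]
    push_cast
    rfl
  have hNhatsum : ∀ ω, ((Nhat i ω : ℝ)) = ∑ k, XH k ω := by
    intro ω
    rw [hNhat, Finset.card_filter]
    push_cast
    rfl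
  have hNmeas : Measurable fun ω => N i ω := by
    have h1 : (fun ω => N i ω) = fun ω => ∑ k : Fin n, (if I k ω = i then 1 else 0) := by
      funext ω; rw [hN, Finset.card_filter]
    rw [h1]
    exact Finset.measurable_sum _ fun k _ =>
      Measurable.ite (hmeasI k) measurable_const measurable_const
  -- the misclassification count
  set D : Ω → ℝ := fun ω => ∑ k, (if Ihat k ω = I k ω then (0:ℝ) else 1) with hD_def
  have hD0 : ∀ ω, 0 ≤ D ω := fun ω =>
    Finset.sum_nonneg fun k _ => by split <;> norm_num
  -- special sets
  set S0 : Set Ω := {ω | N i ω = 0} with hS0_def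
  set S1 : Set Ω := {ω | (N i ω : ℝ) ≤ (n:ℝ) * a / 2} with hS1_def
  have hS0meas : MeasurableSet S0 := hNmeas (measurableSet_singleton 0)
  have hS1meas : MeasurableSet S1 := by
    have hcast : Measurable fun ω => ((N i ω : ℝ)) :=
      measurable_from_top.comp hNmeas
    exact measurableSet_le hcast measurable_const
  set q0 : Ω → ℝ := S0.indicator (fun _ => (1:ℝ)) with hq0_def
  set q1 : Ω → ℝ := S1.indicator (fun _ => (1:ℝ)) with hq1_def
  have hq0nn : ∀ ω, 0 ≤ q0 ω := fun ω => Set.indicator_nonneg (fun _ _ => zero_le_one) ω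
  have hq1nn : ∀ ω, 0 ≤ q1 ω := fun ω => Set.indicator_nonneg (fun _ _ => zero_le_one) ω
  -- the dominating function
  set bound : Ω → ℝ := fun ω => c * q0 ω + 2 * c * q1 ω + (4 * c / ((n:ℝ) * a)) * D ω
    with hbound_def
  -- representations of the estimators as kernel combinations
  have hrephat : ∀ ω, (fun t => fhat i ω t)
      = fun t => ∑ k, (XH k ω / (Nhat i ω : ℝ)) * (h⁻¹ * K ((t - Y k ω) / h)) := by
    intro ω
    funext t
    rw [hfhat, Finset.mul_sum]
    refine Finset.sum_congr rfl fun k _ => ?_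
    rw [hKh, hXHk]
    ring
  have hrepbar : ∀ ω, N i ω ≠ 0 → (fun t => fbar i ω t)
      = fun t => ∑ k, (X k ω / (N i ω : ℝ)) * (h⁻¹ * K ((t - Y k ω) / h)) := by
    intro ω hN0
    funext t
    rw [hfbar, if_neg hN0, Finset.mul_sum]
    refine Finset.sum_congr rfl fun k _ => ?_
    rw [hKh, hXk]
    ring
  have hbarzero : ∀ ω, N i ω = 0 → (fun t => fbar i ω t) = fun _ => (0:ℝ) := by
    intro ω hN0
    funext t
    rw [hfbar, if_pos hN0]
  have hinthat : ∀ ω, Integrable (fun t => fhat i ω t) := by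
    intro ω
    rw [hrephat ω]
    exact integrable_finset_sum _ fun k _ => (kh_integrable' hKint hh (Y k ω)).const_mul _
  have hintbar : ∀ ω, Integrable (fun t => fbar i ω t) := by
    intro ω
    by_cases hN0 : N i ω = 0
    · rw [hbarzero ω hN0]
      exact integrable_zero ℝ ℝ volume
    · rw [hrepbar ω hN0]
      exact integrable_finset_sum _ fun k _ => (kh_integrable' hKint hh (Y k ω)).const_mul _
  have hbarl1 : ∀ ω, (∫ t, |fbar i ω t|) ≤ c := by
    intro ω
    by_cases hN0 : N i ω = 0
    · have heq : (∫ t, |fbar i ω t|) = ∫ _t : ℝ, |(0:ℝ)| := by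
        congr 1
        funext t
        rw [congrFun (hbarzero ω hN0) t]
      rw [heq]
      simpa using hc0
    · have hN1 : (1:ℝ) ≤ (N i ω : ℝ) := by
        exact_mod_cast Nat.one_le_iff_ne_zero.2 hN0
      have hNr0 : (0:ℝ) < (N i ω : ℝ) := by linarith
      have heq : (∫ t, |fbar i ω t|)
          = ∫ t, |∑ k, (X k ω / (N i ω : ℝ)) * (h⁻¹ * K ((t - Y k ω) / h))| := by
        congr 1
        funext t
        rw [congrFun (hrepbar ω hN0) t]
      rw [heq]
      refine le_trans (kh_sum_l1' hKint hh _ _) ?_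
      have hsum1 : (∑ k, |X k ω / (N i ω : ℝ)|) = 1 := by
        have habs : ∀ k : Fin n, |X k ω / (N i ω : ℝ)| = X k ω / (N i ω : ℝ) := fun k =>
          abs_of_nonneg (div_nonneg (hXnn k ω) hNr0.le)
        rw [Finset.sum_congr rfl fun k _ => habs k, ← Finset.sum_div, ← hNsum ω,
          div_self hNr0.ne']
      rw [hsum1, one_mul]
  -- Step 1: a.e. pointwise bound
  have hr0' : (0:ℝ) ≤ 4 * c / ((n:ℝ) * a) := div_nonneg (by linarith) hna.le
  have hstep1 : ∀ᵐ ω ∂P, (∫ t, |fhat i ω t - f i t|)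
      ≤ (∫ t, |fbar i ω t - f i t|) + bound ω := by
    filter_upwards [hNhatpos i hi] with ω hNh
    have hAr1 : (1:ℝ) ≤ (Nhat i ω : ℝ) := by exact_mod_cast hNh
    have hAr0 : (0:ℝ) < (Nhat i ω : ℝ) := by linarith
    have hsumXH : ∑ k, XH k ω = (Nhat i ω : ℝ) := (hNhatsum ω).symm
    -- bound on the L1 distance between fhat and fbar
    have hψ2 : (∫ t, |fhat i ω t - fbar i ω t|) ≤ bound ω := by
      by_cases hN0 : N i ω = 0
      · -- fbar vanishes
        have heq : (∫ t, |fhat i ω t - fbar i ω t|)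
            = ∫ t, |∑ k, (XH k ω / (Nhat i ω : ℝ)) * (h⁻¹ * K ((t - Y k ω) / h))| := by
          congr 1
          funext t
          rw [congrFun (hbarzero ω hN0) t, sub_zero, congrFun (hrephat ω) t]
        rw [heq]
        refine le_trans (kh_sum_l1' hKint hh _ _) ?_
        have hsum1 : (∑ k, |XH k ω / (Nhat i ω : ℝ)|) = 1 := by
          have habs : ∀ k : Fin n, |XH k ω / (Nhat i ω : ℝ)| = XH k ω / (Nhat i ω : ℝ) :=
            fun k => abs_of_nonneg (div_nonneg (hXHnn k ω) hAr0.le)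
          rw [Finset.sum_congr rfl fun k _ => habs k, ← Finset.sum_div, hsumXH,
            div_self hAr0.ne']
        rw [hsum1, one_mul]
        have hq0v : q0 ω = 1 := by
          rw [hq0_def, Set.indicator_of_mem (show ω ∈ S0 from hN0)]
        simp only [hbound_def, hq0v, mul_one]
        nlinarith [mul_nonneg hc0 (hq1nn ω), mul_nonneg hr0' (hD0 ω)]
      · -- N ≥ 1
        have hN1 : (1:ℝ) ≤ (N i ω : ℝ) := by
          exact_mod_cast Nat.one_le_iff_ne_zero.2 hN0
        have hNr0 : (0:ℝ) < (N i ω : ℝ) := by linarith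
        have heq : (∫ t, |fhat i ω t - fbar i ω t|)
            = ∫ t, |∑ k, (XH k ω / (Nhat i ω : ℝ) - X k ω / (N i ω : ℝ))
                * (h⁻¹ * K ((t - Y k ω) / h))| := by
          congr 1
          funext t
          rw [congrFun (hrephat ω) t, congrFun (hrepbar ω hN0) t, ← Finset.sum_sub_distrib]
          congr 1
          exact Finset.sum_congr rfl fun k _ => by ring
        rw [heq]
        refine le_trans (kh_sum_l1' hKint hh _ _) ?_
        have hSD : (∑ k, |XH k ω / (Nhat i ω : ℝ) - X k ω / (N i ω : ℝ)|)
            ≤ 2 * D ω / (N i ω : ℝ) := by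
          have hab : ∀ k : Fin n, |XH k ω - X k ω|
              ≤ (fun k : Fin n => if Ihat k ω = I k ω then (0:ℝ) else 1) k := by
            intro k
            dsimp only
            rw [hXHk, hXk]
            by_cases h1 : Ihat k ω = I k ω
            · rw [if_pos h1, h1, sub_self, abs_zero]
            · rw [if_neg h1]
              by_cases h2 : Ihat k ω = i <;> by_cases h3 : I k ω = i <;>
                simp [h2, h3] <;> norm_num
          have hdnn : ∀ k : Fin n,
              0 ≤ (fun k : Fin n => if Ihat k ω = I k ω then (0:ℝ) else 1) k := by
            intro k
            dsimp only
            by_cases h1 : Ihat k ω = I k ω <;> simp [h1]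
          have hres := coeff_sum_bound' hAr1 hN1 (fun k => hXHnn k ω) hdnn hab
            hsumXH (hNsum ω).symm
          simpa only [hD_def] using hres
        have hS2 : (∑ k, |XH k ω / (Nhat i ω : ℝ) - X k ω / (N i ω : ℝ)|) ≤ 2 := by
          calc (∑ k, |XH k ω / (Nhat i ω : ℝ) - X k ω / (N i ω : ℝ)|)
              ≤ ∑ k, (XH k ω / (Nhat i ω : ℝ) + X k ω / (N i ω : ℝ)) := by
                refine Finset.sum_le_sum fun k _ => ?_
                rw [sub_eq_add_neg]
                refine (abs_add_le _ _).trans ?_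
                rw [abs_neg, abs_of_nonneg (div_nonneg (hXHnn k ω) hAr0.le),
                  abs_of_nonneg (div_nonneg (hXnn k ω) hNr0.le)]
            _ = 2 := by
                rw [Finset.sum_add_distrib, ← Finset.sum_div, ← Finset.sum_div, hsumXH,
                  ← hNsum ω, div_self hAr0.ne', div_self hNr0.ne']
                norm_num
        by_cases hsm : (N i ω : ℝ) ≤ (n:ℝ) * a / 2
        · have hq1v : q1 ω = 1 := by
            rw [hq1_def, Set.indicator_of_mem (show ω ∈ S1 from hsm)]
          have hle2 : (∑ k, |XH k ω / (Nhat i ω : ℝ) - X k ω / (N i ω : ℝ)|) * c ≤ 2 * c :=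
            mul_le_mul_of_nonneg_right hS2 hc0
          simp only [hbound_def, hq1v, mul_one]
          nlinarith [mul_nonneg hc0 (hq0nn ω), mul_nonneg hr0' (hD0 ω)]
        · push_neg at hsm
          have h2' : (∑ k, |XH k ω / (Nhat i ω : ℝ) - X k ω / (N i ω : ℝ)|) * c
              ≤ (2 * D ω / (N i ω : ℝ)) * c := mul_le_mul_of_nonneg_right hSD hc0
          have h3' : (2 * D ω / (N i ω : ℝ)) * c ≤ (4 * c / ((n:ℝ) * a)) * D ω := by
            have hkey : 2 * D ω / (N i ω : ℝ) ≤ 2 * D ω / ((n:ℝ) * a / 2) := by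
              refine div_le_div_of_nonneg_left (by linarith [hD0 ω]) (by linarith) hsm.le
            calc (2 * D ω / (N i ω : ℝ)) * c ≤ (2 * D ω / ((n:ℝ) * a / 2)) * c :=
                  mul_le_mul_of_nonneg_right hkey hc0
              _ = (4 * c / ((n:ℝ) * a)) * D ω := by
                  field_simp
                  ring
          simp only [hbound_def]
          nlinarith [mul_nonneg hc0 (hq0nn ω), mul_nonneg (show (0:ℝ) ≤ 2*c by linarith) (hq1nn ω)]
    -- triangle inequality
    have h1 : Integrable (fun t => |fbar i ω t - f i t|) := ((hintbar ω).sub hfint).abs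
    have h2 : Integrable (fun t => |fhat i ω t - fbar i ω t|) := ((hinthat ω).sub (hintbar ω)).abs
    calc (∫ t, |fhat i ω t - f i t|)
        ≤ ∫ t, (|fbar i ω t - f i t| + |fhat i ω t - fbar i ω t|) := by
          refine integral_mono (((hinthat ω).sub hfint).abs) (h1.add h2) fun t => ?_
          have h3 := abs_sub_le (fhat i ω t) (fbar i ω t) (f i t)
          dsimp only
          linarith
      _ = (∫ t, |fbar i ω t - f i t|) + ∫ t, |fhat i ω t - fbar i ω t| := integral_add h1 h2
      _ ≤ (∫ t, |fbar i ω t - f i t|) + bound ω := by linarith [hψ2]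
  -- Step 2: integrability of the oracle error
  have hψ1int : Integrable (fun ω => ∫ t, |fbar i ω t - f i t|) P := by
    obtain ⟨K', hK'sm, hKK'⟩ : ∃ K' : ℝ → ℝ, StronglyMeasurable K' ∧ K =ᵐ[volume] K' :=
      ⟨hKint.1.mk K, hKint.1.stronglyMeasurable_mk, hKint.1.ae_eq_mk⟩
    obtain ⟨f', hf'sm, hff'⟩ : ∃ f' : ℝ → ℝ, StronglyMeasurable f' ∧ f i =ᵐ[volume] f' :=
      ⟨hfint.1.mk (f i), hfint.1.stronglyMeasurable_mk, hfint.1.ae_eq_mk⟩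
    have hqmp : ∀ y : ℝ,
        Measure.QuasiMeasurePreserving (fun t : ℝ => (t - y) / h) volume volume := by
      intro y
      have hdiv : Measure.QuasiMeasurePreserving (fun t : ℝ => t / h) volume volume := by
        have hrw : (fun t : ℝ => t / h) = (fun t : ℝ => h⁻¹ * t) := by
          funext t
          rw [div_eq_inv_mul]
        rw [hrw]
        refine ⟨measurable_const_mul _, ?_⟩
        rw [Real.map_volume_mul_left (inv_ne_zero hh.ne')]
        exact Measure.smul_absolutelyContinuous
      exact hdiv.comp (measurePreserving_sub_right volume y).quasiMeasurePreserving
    have hGmeas : Measurable (fun p : Ω × ℝ =>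
        |(if N i p.1 = 0 then (0:ℝ) else (N i p.1 : ℝ)⁻¹ *
          ∑ k, (h⁻¹ * K' ((p.2 - Y k p.1) / h)) * (X k p.1)) - f' p.2|) := by
      refine Measurable.abs (Measurable.sub ?_ (hf'sm.measurable.comp measurable_snd))
      refine Measurable.ite ((hNmeas.comp measurable_fst) (measurableSet_singleton 0))
        measurable_const ?_
      refine Measurable.mul ((measurable_from_top.comp (hNmeas.comp measurable_fst)).inv) ?_
      refine Finset.measurable_sum _ fun k _ => ?_
      refine Measurable.mul ?_ ?_
      · exact (hK'sm.measurable.comp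
          ((measurable_snd.sub ((hYmeas k).comp measurable_fst)).div_const h)).const_mul _
      · exact Measurable.ite (((hImeas k).comp measurable_fst) (measurableSet_singleton i))
          measurable_const measurable_const
    have hGsm : StronglyMeasurable (fun ω => ∫ t,
        |(if N i ω = 0 then (0:ℝ) else (N i ω : ℝ)⁻¹ *
          ∑ k, (h⁻¹ * K' ((t - Y k ω) / h)) * (X k ω)) - f' t|) :=
      hGmeas.stronglyMeasurable.integral_prod_right'
    have heqfun : ∀ ω, (∫ t, |fbar i ω t - f i t|)
        = ∫ t, |(if N i ω = 0 then (0:ℝ) else (N i ω : ℝ)⁻¹ *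
            ∑ k, (h⁻¹ * K' ((t - Y k ω) / h)) * (X k ω)) - f' t| := by
      intro ω
      refine integral_congr_ae ?_
      have hall : ∀ᵐ t ∂(volume : Measure ℝ), ∀ k : Fin n,
          K ((t - Y k ω) / h) = K' ((t - Y k ω) / h) := by
        rw [MeasureTheory.ae_all_iff]
        intro k
        exact (hqmp (Y k ω)).ae_eq_comp hKK'
      filter_upwards [hall, hff'] with t ht htf
      rw [hfbar, htf]
      congr 2
      by_cases hN0 : N i ω = 0
      · rw [if_pos hN0, if_pos hN0]
      · rw [if_neg hN0, if_neg hN0]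
        congr 1
        refine Finset.sum_congr rfl fun k _ => ?_
        rw [hKh, ht k, hXk]
    have heq2 : (fun ω => ∫ t, |fbar i ω t - f i t|)
        = fun ω => ∫ t, |(if N i ω = 0 then (0:ℝ) else (N i ω : ℝ)⁻¹ *
            ∑ k, (h⁻¹ * K' ((t - Y k ω) / h)) * (X k ω)) - f' t| := funext heqfun
    rw [heq2]
    refine Integrable.mono' (integrable_const (c + ∫ t, |f i t|))
      hGsm.aestronglyMeasurable ?_
    refine Filter.Eventually.of_forall fun ω => ?_
    rw [← heqfun ω, Real.norm_eq_abs,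
      abs_of_nonneg (integral_nonneg fun t => abs_nonneg _)]
    have habs_sub : ∀ t : ℝ, |fbar i ω t - f i t| ≤ |fbar i ω t| + |f i t| := by
      intro t
      rw [sub_eq_add_neg]
      refine (abs_add_le _ _).trans ?_
      rw [abs_neg]
    calc (∫ t, |fbar i ω t - f i t|)
        ≤ ∫ t, (|fbar i ω t| + |f i t|) :=
          integral_mono ((hintbar ω).sub hfint).abs ((hintbar ω).abs.add hfint.abs)
            habs_sub
      _ = (∫ t, |fbar i ω t|) + ∫ t, |f i t| := integral_add (hintbar ω).abs hfint.abs
      _ ≤ c + ∫ t, |f i t| := by linarith [hbarl1 ω]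
  -- Step 3: integral of the dominating function
  have hq0int : Integrable q0 P := (integrable_const (1:ℝ)).indicator hS0meas
  have hq1int : Integrable q1 P := (integrable_const (1:ℝ)).indicator hS1meas
  have hDind : ∀ k : Fin n, (fun ω => if Ihat k ω = I k ω then (0:ℝ) else 1)
      = ({ω | Ihat k ω ≠ I k ω}).indicator (fun _ => (1:ℝ)) := by
    intro k; funext ω
    rw [Set.indicator_apply]
    by_cases hk : Ihat k ω = I k ω <;> simp [hk]
  have hDint : Integrable D P := by
    rw [hD_def]
    refine integrable_finset_sum _ fun k _ => ?_
    rw [hDind k]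
    exact (integrable_const (1:ℝ)).indicator (hmeasNe k)
  have hboundint : Integrable bound P := by
    refine Integrable.add (Integrable.add ?_ ?_) ?_
    · exact hq0int.const_mul c
    · exact hq1int.const_mul (2*c)
    · exact hDint.const_mul _
  -- value of the three probabilistic terms
  have hT1 : (P S0).toReal = (1 - a) ^ n := by
    have hset : S0 = ⋂ k ∈ (Finset.univ : Finset (Fin n)),
        (fun ω => (Y k ω, I k ω)) ⁻¹' ((Set.univ : Set ℝ) ×ˢ ({i}ᶜ : Set ℕ)) := by
      ext ω
      simp only [hS0_def, Set.mem_setOf_eq, hN, Finset.card_eq_zero, Set.mem_iInter,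
        Set.mem_preimage, Set.mem_prod, Set.mem_univ, true_and, Set.mem_compl_iff,
        Set.mem_singleton_iff, Finset.mem_univ, forall_true_left,
        Finset.filter_eq_empty_iff]
    have hmul := hindep.measure_inter_preimage_eq_mul
      (sets := fun _ : Fin n => ((Set.univ : Set ℝ) ×ˢ ({i}ᶜ : Set ℕ)))
      Finset.univ
      (fun k _ => MeasurableSet.univ.prod (measurableSet_singleton i).compl)
    have hpre : ∀ k : Fin n,
        P ((fun ω => (Y k ω, I k ω)) ⁻¹' ((Set.univ : Set ℝ) ×ˢ ({i}ᶜ : Set ℕ)))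
          = 1 - P {ω | I i0 ω = i} := by
      intro k
      have h1 : (fun ω => (Y k ω, I k ω)) ⁻¹' ((Set.univ : Set ℝ) ×ˢ ({i}ᶜ : Set ℕ))
          = {ω | I k ω = i}ᶜ := by
        ext ω; simp
      rw [h1, measure_compl (hmeasI k) (measure_ne_top P _), measure_univ, hPI k]
    rw [hset, hmul, Finset.prod_congr rfl (fun k _ => hpre k), Finset.prod_const,
      Finset.card_univ, Fintype.card_fin, ENNReal.toReal_pow,
      ENNReal.toReal_sub_of_le prob_le_one ENNReal.one_ne_top, ENNReal.toReal_one,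
      ha_def, hα i hi]
  have hT2 : (P S1).toReal ≤ Real.exp (-(n:ℝ) * a ^ 2 / 4) := by
    have hXmeas : ∀ k, Measurable (X k) := fun k =>
      Measurable.ite (hmeasI k) measurable_const measurable_const
    have hXindep : iIndepFun X P := by
      have hg : Measurable (fun p : ℝ × ℕ => if p.2 = i then (1:ℝ) else 0) :=
        (measurable_from_top (f := fun j : ℕ => if j = i then (1:ℝ) else 0)).comp
          measurable_snd
      exact hindep.comp (fun _ => fun p : ℝ × ℕ => if p.2 = i then (1:ℝ) else 0)
        (fun _ => hg)
    have hXsum_nonneg : ∀ ω, 0 ≤ (∑ k, X k) ω := by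
      intro ω
      rw [Finset.sum_apply]
      exact Finset.sum_nonneg fun k _ => hXnn k ω
    have hSmeas : Measurable (fun ω => (∑ k, X k) ω) := by
      simp only [Finset.sum_apply]
      exact Finset.measurable_sum _ fun k _ => hXmeas k
    have hint : Integrable (fun ω => Real.exp ((-1) * (∑ k, X k) ω)) P := by
      refine Integrable.mono' (integrable_const (1:ℝ))
        ((hSmeas.const_mul (-1)).exp.aestronglyMeasurable) ?_
      refine Filter.Eventually.of_forall fun ω => ?_
      rw [Real.norm_eq_abs, abs_of_pos (Real.exp_pos _), Real.exp_le_one_iff]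
      nlinarith [hXsum_nonneg ω]
    have hchern := measure_le_le_exp_mul_mgf (μ := P) (X := ∑ k, X k) ((n:ℝ) * a / 2)
      (by norm_num : (-1:ℝ) ≤ 0) hint
    rw [hXindep.mgf_sum hXmeas Finset.univ] at hchern
    have hmgfk : ∀ k : Fin n, mgf (X k) P (-1) = 1 + (Real.exp (-1) - 1) * a := by
      intro k
      have hunf : mgf (X k) P (-1) = ∫ ω, Real.exp ((-1) * X k ω) ∂P := rfl
      have hrw : (fun ω => Real.exp ((-1) * X k ω))
          = fun ω => 1 + (Real.exp (-1) - 1)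
              * ({ω | I k ω = i}.indicator (fun _ => (1:ℝ)) ω) := by
        funext ω
        rw [hXk, Set.indicator_apply]
        by_cases hk : I k ω = i <;> simp [hk]
      have hindint : Integrable ({ω | I k ω = i}.indicator (fun _ => (1:ℝ))) P :=
        (integrable_const (1:ℝ)).indicator (hmeasI k)
      rw [hunf, hrw]
      rw [integral_add (integrable_const 1) (hindint.const_mul _), integral_const,
        integral_const_mul, integral_indicator_const (1:ℝ) (hmeasI k), smul_eq_mul,
        mul_one, measureReal_def P {ω | I k ω = i}, haP k]
      simp
    have hprod : (∏ k : Fin n, mgf (X k) P (-1)) = (1 + (Real.exp (-1) - 1) * a) ^ n := by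
      rw [Finset.prod_congr rfl fun k _ => hmgfk k, Finset.prod_const, Finset.card_univ,
        Fintype.card_fin]
    have hsetS1 : S1 = {ω | (∑ k, X k) ω ≤ (n:ℝ) * a / 2} := by
      ext ω
      simp only [hS1_def, Set.mem_setOf_eq, Finset.sum_apply]
      rw [hNsum ω]
    rw [hsetS1]
    rw [hprod] at hchern
    refine hchern.trans ?_
    have hfac0 : (0:ℝ) ≤ 1 + (Real.exp (-1) - 1) * a := by
      nlinarith [Real.exp_pos (-1)]
    have hbern := bernoulli_mgf_bound' ha0.le ha1
    calc Real.exp (-(-1) * ((n:ℝ) * a / 2)) * (1 + (Real.exp (-1) - 1) * a) ^ n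
        ≤ Real.exp (-(-1) * ((n:ℝ) * a / 2)) * (Real.exp (-(a/2) - a^2/4)) ^ n := by
          refine mul_le_mul_of_nonneg_left ?_ (Real.exp_pos _).le
          exact pow_le_pow_left₀ hfac0 hbern n
      _ = Real.exp (-(n:ℝ) * a ^ 2 / 4) := by
          rw [← Real.exp_nat_mul, ← Real.exp_add]
          congr 1
          ring
  have hT3 : (∫ ω, D ω ∂P) ≤ (n:ℝ) * φ := by
    have hφk : ∀ k : Fin n, (P {ω | Ihat k ω ≠ I k ω}).toReal ≤ φ := by
      intro k
      rw [hφ]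
      exact Finset.le_sup' (fun k : Fin n => (P {ω | Ihat k ω ≠ I k ω}).toReal)
        (Finset.mem_univ k)
    have hDval : (∫ ω, D ω ∂P) = ∑ k, (P {ω | Ihat k ω ≠ I k ω}).toReal := by
      simp only [hD_def]
      rw [integral_finset_sum _ (fun k _ => by
        rw [hDind k]
        exact (integrable_const (1:ℝ)).indicator (hmeasNe k))]
      refine Finset.sum_congr rfl fun k _ => ?_
      rw [hDind k, integral_indicator_const (1:ℝ) (hmeasNe k), smul_eq_mul, mul_one, measureReal_def]
    rw [hDval]
    calc ∑ k, (P {ω | Ihat k ω ≠ I k ω}).toReal ≤ ∑ _k : Fin n, φ :=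
          Finset.sum_le_sum fun k _ => hφk k
      _ = (n:ℝ) * φ := by
          rw [Finset.sum_const, Finset.card_univ, Fintype.card_fin, nsmul_eq_mul]
  have hboundval : (∫ ω, bound ω ∂P)
      ≤ c * (1 - a)^n + 2 * c * Real.exp (-(n:ℝ) * a ^ 2 / 4) + (4 * c / ((n:ℝ) * a)) * ((n:ℝ) * φ) := by
    have e1 : (∫ ω, q0 ω ∂P) = (P S0).toReal := by
      rw [hq0_def, integral_indicator_const (1:ℝ) hS0meas, smul_eq_mul, mul_one, measureReal_def]
    have e2 : (∫ ω, q1 ω ∂P) = (P S1).toReal := by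
      rw [hq1_def, integral_indicator_const (1:ℝ) hS1meas, smul_eq_mul, mul_one, measureReal_def]
    have hsplit : (∫ ω, bound ω ∂P) = c * (∫ ω, q0 ω ∂P) + 2*c*(∫ ω, q1 ω ∂P)
        + (4 * c / ((n:ℝ) * a)) * ∫ ω, D ω ∂P := by
      rw [hbound_def]
      have i1 : Integrable (fun ω => c * q0 ω + 2*c*q1 ω) P :=
        (hq0int.const_mul c).add (hq1int.const_mul (2*c))
      have e3 := integral_add (μ := P) i1 (hDint.const_mul (4 * c / ((n:ℝ) * a)))
      have e4 := integral_add (μ := P) (hq0int.const_mul c) (hq1int.const_mul (2*c))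
      simp only [e3, e4, integral_const_mul]
    rw [hsplit, e1, e2, hT1]
    have hr0 : 0 ≤ 4 * c / ((n:ℝ) * a) := by positivity
    refine add_le_add (add_le_add le_rfl ?_) ?_
    · exact mul_le_mul_of_nonneg_left hT2 (by linarith)
    · exact mul_le_mul_of_nonneg_left hT3 hr0
  -- final assembly
  have hmain : (∫ ω, (∫ t, |fhat i ω t - f i t|) ∂P)
      ≤ (∫ ω, ((∫ t, |fbar i ω t - f i t|) + bound ω) ∂P) := by
    refine integral_mono_of_nonneg ?_ (hψ1int.add hboundint) hstep1
    exact Filter.Eventually.of_forall fun ω => integral_nonneg fun t => abs_nonneg _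
  rw [integral_add hψ1int hboundint] at hmain
  have h6 : (1:ℝ) ≤ Real.sqrt 6 := by
    rw [show (1:ℝ) = Real.sqrt 1 from (Real.sqrt_one).symm]
    exact Real.sqrt_le_sqrt (by norm_num)
  have h2c : 2 * c * Real.exp (-(n:ℝ) * a ^ 2 / 4)
      ≤ 2 * Real.sqrt 6 * c / a * Real.exp (-(n:ℝ) * a ^ 2 / 4) := by
    refine mul_le_mul_of_nonneg_right ?_ (Real.exp_pos _).le
    rw [div_eq_mul_inv]
    have h1 : 2 * c * a ≤ 2 * Real.sqrt 6 * c := by nlinarith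
    have h2 : 2 * c = 2 * c * a * a⁻¹ := by field_simp
    rw [h2]
    exact mul_le_mul_of_nonneg_right h1 (inv_nonneg.2 ha0.le)
  have hφterm : (4 * c / ((n:ℝ) * a)) * ((n:ℝ) * φ) = 4 * c / a * φ := by
    field_simp
  linarith [hboundval]
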